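/- Let S ⊆ B(H)_sa be an invex set with respect to η : S × S → B(H)_sa satisfying condition C, and let f : ℝ → ℝ be continuous and operator preinvex with respect to η on S. Then for every A, B ∈ S, with V := A + η(B,A), the following inequalities hold in the operator order: 0 ≤ ∫₀¹ f(A + tη(B,A)) dt − f((A + V)/2) ≤ (f(A) + f(B))/2 − ∫₀¹ f(A + tη(B,A)) dt. -/

import Mathlib

set_option synthInstance.maxHeartbeats 1000000
set_option maxHeartbeats 2000000

open intervalIntegral MeasureTheory

section Helpers

variable {H : Type*} [NormedAddCommGroup H] [InnerProductSpace ℂ H] [CompleteSpace H]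

/-- star as a real-linear continuous map on B(H). -/
noncomputable def opStarCLM : (H →L[ℂ] H) →L[ℝ] (H →L[ℂ] H) where
  toFun := star
  map_add' := star_add
  map_smul' r x := by simp only [RingHom.id_apply]; rw [star_smul, star_trivial]
  cont := continuous_star

/-- real part of ⟪x, T x⟫ as a real-linear continuous functional on B(H). -/
noncomputable def opInnerCLM (x : H) : (H →L[ℂ] H) →L[ℝ] ℝ :=
  (RCLike.reCLM (K := ℂ)).comp (((innerSL ℂ x).comp
    ((ContinuousLinearMap.apply ℂ H x))).restrictScalars ℝ)

lemma opInnerCLM_apply (x : H) (T : H →L[ℂ] H) :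
    opInnerCLM x T = RCLike.re (inner ℂ x (T x) : ℂ) := rfl

lemma op_nonneg_of (T : H →L[ℂ] H) (h1 : IsSelfAdjoint T)
    (h2 : ∀ x : H, 0 ≤ RCLike.re (inner ℂ (T x) x : ℂ)) : 0 ≤ T :=
  (ContinuousLinearMap.nonneg_iff_isPositive T).mpr ⟨ContinuousLinearMap.isSelfAdjoint_iff_isSymmetric.mp h1, h2⟩

lemma op_smul_nonneg (T : H →L[ℂ] H) (c : ℝ) (hc : 0 ≤ c) (h : 0 ≤ T) :
    0 ≤ c • T := by
  rw [ContinuousLinearMap.nonneg_iff_isPositive] at h ⊢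
  refine ⟨?_, fun x => ?_⟩
  · rw [← ContinuousLinearMap.isSelfAdjoint_iff_isSymmetric]; unfold IsSelfAdjoint
    rw [star_smul, star_trivial, h.isSelfAdjoint.star_eq]
  · have := h.2 x
    unfold ContinuousLinearMap.reApplyInnerSelf at this ⊢
    rw [ContinuousLinearMap.smul_apply, RCLike.real_smul_eq_coe_smul (K := ℂ),
      inner_smul_left]
    simp only [RCLike.conj_ofReal, RCLike.re_ofReal_mul]
    exact mul_nonneg hc this

lemma op_smul_le_smul {T U : H →L[ℂ] H} (c : ℝ) (hc : 0 ≤ c) (h : T ≤ U) :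
    c • T ≤ c • U := by
  rw [← sub_nonneg] at h ⊢
  rw [← smul_sub]
  exact op_smul_nonneg _ c hc h

/-- Monotonicity of the operator-valued interval integral. -/
lemma op_integral_mono (a b : ℝ) (hab : a ≤ b) (u v : ℝ → (H →L[ℂ] H))
    (hu : IntervalIntegrable u volume a b) (hv : IntervalIntegrable v volume a b)
    (h : ∀ t ∈ Set.Icc a b, u t ≤ v t) :
    (∫ t in a..b, u t) ≤ ∫ t in a..b, v t := by
  rw [← sub_nonneg, ← intervalIntegral.integral_sub hv hu]
  set w : ℝ → (H →L[ℂ] H) := fun t => v t - u t with hw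
  have hwi : IntervalIntegrable w volume a b := hv.sub hu
  have hpos : ∀ t ∈ Set.Icc a b, (w t).IsPositive := fun t ht =>
    (ContinuousLinearMap.le_def (u t) (v t)).mp (h t ht)
  apply op_nonneg_of
  · have h1 : opStarCLM (∫ t in a..b, w t) = ∫ t in a..b, opStarCLM (w t) :=
      (ContinuousLinearMap.intervalIntegral_comp_comm _ hwi).symm
    have h2 : (∫ t in a..b, opStarCLM (w t)) = ∫ t in a..b, w t := by
      apply intervalIntegral.integral_congr
      intro t ht
      rw [Set.uIcc_of_le hab] at ht
      exact (hpos t ht).isSelfAdjoint.star_eq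
    unfold IsSelfAdjoint
    show opStarCLM _ = _
    rw [h1, h2]
  · intro x
    have h1 : opInnerCLM x (∫ t in a..b, w t) = ∫ t in a..b, opInnerCLM x (w t) :=
      (ContinuousLinearMap.intervalIntegral_comp_comm _ hwi).symm
    have h2 : 0 ≤ ∫ t in a..b, opInnerCLM x (w t) := by
      apply intervalIntegral.integral_nonneg hab
      intro t ht
      rw [opInnerCLM_apply, inner_re_symm]
      exact (hpos t ht).2 x
    calc (0:ℝ) ≤ ∫ t in a..b, opInnerCLM x (w t) := h2
      _ = opInnerCLM x (∫ t in a..b, w t) := h1.symm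
      _ = _ := by rw [opInnerCLM_apply, inner_re_symm]

lemma contOn_cfc_line (f : ℝ → ℝ) (hf : Continuous f) (A N : H →L[ℂ] H)
    (hsaP : ∀ t : ℝ, IsSelfAdjoint (A + t • N)) :
    ContinuousOn (fun t : ℝ => cfc f (A + t • N)) (Set.Icc 0 1) := by
  set M : ℝ := (‖A‖ + ‖N‖) * ‖(1 : H →L[ℂ] H)‖ with hM
  have hspec : ∀ t ∈ Set.Icc (0:ℝ) 1, spectrum ℝ (A + t • N) ⊆ Set.Icc (-M) M := by
    intro t ht x hx
    have h1 : ‖x‖ ≤ ‖A + t • N‖ * ‖(1 : H →L[ℂ] H)‖ := spectrum.norm_le_norm_mul_of_mem hx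
    have h2 : ‖A + t • N‖ ≤ ‖A‖ + ‖N‖ := by
      refine (norm_add_le _ _).trans ?_
      have : ‖t • N‖ ≤ ‖N‖ := by
        rw [norm_smul, Real.norm_eq_abs]
        calc |t| * ‖N‖ ≤ 1 * ‖N‖ := by
              apply mul_le_mul_of_nonneg_right _ (norm_nonneg N)
              rw [abs_le]; exact ⟨by linarith [ht.1], ht.2⟩
          _ = ‖N‖ := one_mul _
      linarith
    have h3 : ‖x‖ ≤ M := by
      rw [hM]
      exact h1.trans (mul_le_mul_of_nonneg_right h2 (norm_nonneg _))
    rw [Real.norm_eq_abs, abs_le] at h3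
    exact h3
  have key : ∀ n : ℕ, ∃ p : Polynomial ℝ,
      ∀ x ∈ Set.Icc (-M) M, |p.eval x - f x| < 1 / (n + 1) := fun n =>
    exists_polynomial_near_of_continuousOn (-M) M f hf.continuousOn _ (by positivity)
  choose p hp using key
  set F : ℕ → ℝ → (H →L[ℂ] H) := fun n t => Polynomial.aeval (A + t • N) (p n) with hF
  have hFc : ∀ n, Continuous (F n) := by
    intro n
    exact (p n).continuous_aeval.comp (by continuity)
  have hdist : ∀ n, ∀ t ∈ Set.Icc (0:ℝ) 1, ‖cfc f (A + t • N) - F n t‖ ≤ 1 / (n + 1) := by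
    intro n t ht
    rw [hF]
    simp only
    rw [← cfc_polynomial (p n) (A + t • N) (hsaP t),
      ← cfc_sub f (fun x => (p n).eval x) (A + t • N)]
    apply norm_cfc_le (by positivity)
    intro x hx
    rw [Real.norm_eq_abs, abs_sub_comm]
    exact (hp n x (hspec t ht hx)).le
  have huni : TendstoUniformlyOn F (fun t => cfc f (A + t • N)) Filter.atTop
      (Set.Icc (0:ℝ) 1) := by
    rw [Metric.tendstoUniformlyOn_iff]
    intro ε hε
    obtain ⟨n₀, hn₀⟩ := exists_nat_one_div_lt (K := ℝ) hε
    filter_upwards [Filter.eventually_ge_atTop n₀] with n hn t ht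
    rw [dist_eq_norm]
    calc ‖cfc f (A + t • N) - F n t‖ ≤ 1 / (n + 1) := hdist n t ht
      _ ≤ 1 / (n₀ + 1) := by
          apply one_div_le_one_div_of_le (by positivity)
          have : (n₀ : ℝ) ≤ n := by exact_mod_cast hn
          linarith
      _ < ε := hn₀
  exact huni.continuousOn (Filter.Eventually.of_forall fun n => (hFc n).continuousOn).frequently

end Helpers

/-- The integral mean of an operator preinvex function is closer to the
left Hermite–Hadamard bound than to the right one:
`0 ≤ ∫₀¹ f(A + tη(B,A)) dt − f((A+V)/2) ≤ (f(A)+f(B))/2 − ∫₀¹ f(A + tη(B,A)) dt`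
in the operator order, where `V = A + η(B,A)`. -/
theorem integral_closer_to_left_bound_operator_preinvex
    {H : Type*} [NormedAddCommGroup H] [InnerProductSpace ℂ H] [CompleteSpace H]
    (S : Set (H →L[ℂ] H)) (hSsa : ∀ A ∈ S, IsSelfAdjoint A)
    (η : (H →L[ℂ] H) → (H →L[ℂ] H) → (H →L[ℂ] H))
    (hinvex : ∀ A ∈ S, ∀ B ∈ S, ∀ t ∈ Set.Icc (0:ℝ) 1, A + t • η B A ∈ S)
    (hC1 : ∀ A ∈ S, ∀ B ∈ S, ∀ t ∈ Set.Icc (0:ℝ) 1,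
      η A (A + t • η B A) = (-t) • η B A)
    (hC2 : ∀ A ∈ S, ∀ B ∈ S, ∀ t ∈ Set.Icc (0:ℝ) 1,
      η B (A + t • η B A) = (1 - t) • η B A)
    (f : ℝ → ℝ) (hf : Continuous f)
    (hpreinvex : ∀ A ∈ S, ∀ B ∈ S, ∀ t ∈ Set.Icc (0:ℝ) 1,
      cfc f (A + t • η B A) ≤ (1 - t) • cfc f A + t • cfc f B) :
    ∀ A ∈ S, ∀ B ∈ S, ∀ V : H →L[ℂ] H, V = A + η B A →
      0 ≤ (∫ t in (0:ℝ)..1, cfc f (A + t • η B A)) - cfc f ((2:ℝ)⁻¹ • (A + V)) ∧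
      (∫ t in (0:ℝ)..1, cfc f (A + t • η B A)) - cfc f ((2:ℝ)⁻¹ • (A + V)) ≤
        (2:ℝ)⁻¹ • (cfc f A + cfc f B) - ∫ t in (0:ℝ)..1, cfc f (A + t • η B A) := by
  intro A hA B hB V hV
  subst hV
  set N : H →L[ℂ] H := η B A with hN
  have hmem : ∀ t ∈ Set.Icc (0:ℝ) 1, A + t • N ∈ S := fun t ht => hinvex A hA B hB t ht
  have h01 : (0:ℝ) ∈ Set.Icc (0:ℝ) 1 := by norm_num
  have h11 : (1:ℝ) ∈ Set.Icc (0:ℝ) 1 := by norm_num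
  have hH1 : (2⁻¹:ℝ) ∈ Set.Icc (0:ℝ) 1 := by norm_num
  have hA1mem : A + N ∈ S := by
    have := hmem 1 h11
    rwa [one_smul] at this
  have hHmem : A + (2⁻¹:ℝ) • N ∈ S := hmem _ hH1
  have hsaA : IsSelfAdjoint A := hSsa A hA
  have hsaN : IsSelfAdjoint N := by
    have h := (hSsa _ hA1mem).sub hsaA
    simpa using h
  have hsaP : ∀ t : ℝ, IsSelfAdjoint (A + t • N) := by
    intro t
    apply hsaA.add
    unfold IsSelfAdjoint
    rw [star_smul, star_trivial, hsaN.star_eq]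
  -- eta on the segment
  have etaLem : ∀ s ∈ Set.Icc (0:ℝ) 1, ∀ t ∈ Set.Icc (0:ℝ) 1,
      η (A + s • N) (A + t • N) = (s - t) • N := by
    intro s hs t ht
    rcases le_or_gt s t with hst | hst
    · rcases eq_or_lt_of_le hst with rfl | hlt
      · have h0 := hC1 (A + s • N) (hmem s hs) B hB 0 h01
        simp only [zero_smul, add_zero, neg_zero] at h0
        rw [h0, sub_self, zero_smul]
      · have hs1 : s < 1 := lt_of_lt_of_le hlt ht.2
        set r : ℝ := (t - s) / (1 - s) with hr
        have hrmem : r ∈ Set.Icc (0:ℝ) 1 :=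
          ⟨div_nonneg (by linarith) (by linarith),
           (div_le_one (by linarith)).mpr (by linarith [ht.2])⟩
        have h2 := hC2 A hA B hB s hs
        have h1 := hC1 (A + s • N) (hmem s hs) B hB r hrmem
        rw [h2] at h1
        have hne : (1:ℝ) - s ≠ 0 := by linarith
        have harg : A + s • N + r • ((1 - s) • N) = A + t • N := by
          rw [smul_smul]
          have : r * (1 - s) = t - s := by
            rw [hr, div_mul_cancel₀ _ hne]
          rw [this]
          module
        rw [harg] at h1
        rw [h1, smul_smul]
        congr 1
        have : r * (1 - s) = t - s := by
          rw [hr, div_mul_cancel₀ _ hne]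
        rw [neg_mul]
        rw [this]
        ring
    · have hs0 : 0 < s := lt_of_le_of_lt ht.1 hst
      set r : ℝ := (s - t) / s with hr
      have hrmem : r ∈ Set.Icc (0:ℝ) 1 :=
        ⟨div_nonneg (by linarith) (by linarith),
         (div_le_one (by linarith)).mpr (by linarith [ht.1])⟩
      have h2 := hC1 A hA B hB s hs
      have h1 := hC1 (A + s • N) (hmem s hs) A hA r hrmem
      rw [h2] at h1
      have hne : s ≠ 0 := ne_of_gt hs0
      have hrs : r * s = s - t := by
        rw [hr, div_mul_cancel₀ _ hne]
      have harg : A + s • N + r • ((-s) • N) = A + t • N := by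
        rw [smul_smul]
        have : r * (-s) = t - s := by rw [mul_neg, hrs]; ring
        rw [this]
        module
      rw [harg] at h1
      rw [h1, smul_smul]
      congr 1
      rw [neg_mul, mul_neg, hrs]
      ring
  -- abbreviation
  set g : ℝ → (H →L[ℂ] H) := fun t => cfc f (A + t • N) with hg
  have hgc : ContinuousOn g (Set.Icc 0 1) := contOn_cfc_line f hf A N hsaP
  have hgi : IntervalIntegrable g volume 0 1 := by
    apply ContinuousOn.intervalIntegrable
    rwa [Set.uIcc_of_le zero_le_one]
  have hgi1 : IntervalIntegrable g volume 0 2⁻¹ := by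
    apply ContinuousOn.intervalIntegrable
    rw [Set.uIcc_of_le (by norm_num : (0:ℝ) ≤ 2⁻¹)]
    exact hgc.mono (Set.Icc_subset_Icc le_rfl (by norm_num))
  have hgi2 : IntervalIntegrable g volume 2⁻¹ 1 := by
    apply ContinuousOn.intervalIntegrable
    rw [Set.uIcc_of_le (by norm_num : (2⁻¹:ℝ) ≤ 1)]
    exact hgc.mono (Set.Icc_subset_Icc (by norm_num) le_rfl)
  have hgflipc : ContinuousOn (fun t : ℝ => g (1 - t)) (Set.Icc 0 1) := by
    apply hgc.comp ((continuous_const.sub continuous_id).continuousOn)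
    intro t ht
    exact ⟨by simpa using ht.2, by simpa using ht.1⟩
  have hgflipi : IntervalIntegrable (fun t : ℝ => g (1 - t)) volume 0 1 := by
    apply ContinuousOn.intervalIntegrable
    rwa [Set.uIcc_of_le zero_le_one]
  -- the midpoint operator
  have hmid : (2:ℝ)⁻¹ • (A + (A + N)) = A + (2⁻¹:ℝ) • N := by module
  rw [hmid]
  set m : H →L[ℂ] H := cfc f (A + (2⁻¹:ℝ) • N) with hm
  set fA : H →L[ℂ] H := cfc f A with hfA
  set fB : H →L[ℂ] H := cfc f B with hfB
  -- midpoint bound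
  have hb1 : ∀ t ∈ Set.Icc (0:ℝ) 1, m ≤ (2⁻¹:ℝ) • g t + (2⁻¹:ℝ) • g (1 - t) := by
    intro t ht
    have ht' : (1 - t) ∈ Set.Icc (0:ℝ) 1 := ⟨by linarith [ht.2], by linarith [ht.1]⟩
    have h := hpreinvex (A + t • N) (hmem t ht) (A + (1 - t) • N) (hmem _ ht') 2⁻¹ hH1
    rw [etaLem (1 - t) ht' t ht] at h
    have harg : A + t • N + (2⁻¹:ℝ) • ((1 - t - t) • N) = A + (2⁻¹:ℝ) • N := by
      rw [smul_smul]
      module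
    rw [harg] at h
    have hco : (1 - (2⁻¹:ℝ)) = 2⁻¹ := by norm_num
    rw [hco] at h
    exact h
  -- first-half bound
  have hb2 : ∀ s ∈ Set.Icc (0:ℝ) 2⁻¹,
      g s ≤ (1 - 2 * s) • fA + (2 * s) • m := by
    intro s hs
    have h2s : (2 * s) ∈ Set.Icc (0:ℝ) 1 := ⟨by linarith [hs.1], by linarith [hs.2]⟩
    have h := hpreinvex A hA (A + (2⁻¹:ℝ) • N) hHmem (2 * s) h2s
    have he : η (A + (2⁻¹:ℝ) • N) A = ((2⁻¹:ℝ) - 0) • N := by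
      have := etaLem 2⁻¹ hH1 0 h01
      simpa using this
    rw [he] at h
    have harg : A + (2 * s) • (((2⁻¹:ℝ) - 0) • N) = A + s • N := by
      rw [smul_smul]; module
    rw [harg] at h
    exact h
  -- second-half bound
  have hb3 : ∀ s ∈ Set.Icc (2⁻¹:ℝ) 1,
      g s ≤ (1 - (2 - 2 * s)) • cfc f (A + N) + (2 - 2 * s) • m := by
    intro s hs
    have h2s : (2 - 2 * s) ∈ Set.Icc (0:ℝ) 1 := ⟨by linarith [hs.2], by linarith [hs.1]⟩
    have h := hpreinvex (A + N) hA1mem (A + (2⁻¹:ℝ) • N) hHmem (2 - 2 * s) h2s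
    have he : η (A + (2⁻¹:ℝ) • N) (A + N) = ((2⁻¹:ℝ) - 1) • N := by
      have := etaLem 2⁻¹ hH1 1 h11
      rwa [one_smul] at this
    rw [he] at h
    have harg : A + N + (2 - 2 * s) • (((2⁻¹:ℝ) - 1) • N) = A + s • N := by
      rw [smul_smul]; module
    rw [harg] at h
    exact h
  -- endpoint bound
  have hb4 : cfc f (A + N) ≤ fB := by
    have h := hpreinvex A hA B hB 1 h11
    rw [one_smul, sub_self, zero_smul, zero_add, one_smul] at h
    exact h
  -- LEFT INEQUALITY
  have hflip : (∫ t in (0:ℝ)..1, g (1 - t)) = ∫ t in (0:ℝ)..1, g t := by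
    rw [intervalIntegral.integral_comp_sub_left g 1]
    norm_num
  have hleft : m ≤ ∫ t in (0:ℝ)..1, g t := by
    have h1 : m = ∫ _ in (0:ℝ)..1, m := by
      rw [intervalIntegral.integral_const]
      norm_num
    rw [h1]
    have hgi' : IntervalIntegrable (fun t : ℝ => (2⁻¹:ℝ) • g t) volume 0 1 := by
      apply ContinuousOn.intervalIntegrable
      rw [Set.uIcc_of_le zero_le_one]
      exact hgc.const_smul (2⁻¹:ℝ)
    have hgflipi' : IntervalIntegrable (fun t : ℝ => (2⁻¹:ℝ) • g (1 - t)) volume 0 1 := by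
      apply ContinuousOn.intervalIntegrable
      rw [Set.uIcc_of_le zero_le_one]
      exact hgflipc.const_smul (2⁻¹:ℝ)
    have hsum : IntervalIntegrable (fun t : ℝ => (2⁻¹:ℝ) • g t + (2⁻¹:ℝ) • g (1 - t))
        volume 0 1 := hgi'.add hgflipi'
    have h2 : (∫ t in (0:ℝ)..1, ((2⁻¹:ℝ) • g t + (2⁻¹:ℝ) • g (1 - t)))
        = ∫ t in (0:ℝ)..1, g t := by
      rw [intervalIntegral.integral_add hgi' hgflipi',
        intervalIntegral.integral_smul, intervalIntegral.integral_smul, hflip]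
      module
    rw [← h2]
    exact op_integral_mono 0 1 zero_le_one _ _ intervalIntegrable_const hsum hb1
  -- RIGHT INEQUALITY pieces
  have hsplit : (∫ t in (0:ℝ)..1, g t)
      = (∫ t in (0:ℝ)..2⁻¹, g t) + ∫ t in (2⁻¹:ℝ)..1, g t :=
    (intervalIntegral.integral_add_adjacent_intervals hgi1 hgi2).symm
  have hc1 : (∫ s in (0:ℝ)..2⁻¹, (2 * s)) = 4⁻¹ := by
    rw [intervalIntegral.integral_const_mul, integral_id]
    norm_num
  have hc2 : (∫ s in (0:ℝ)..2⁻¹, (1 - 2 * s)) = 4⁻¹ := by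
    rw [intervalIntegral.integral_sub intervalIntegrable_const
      ((by fun_prop : Continuous fun s : ℝ => 2 * s).intervalIntegrable _ _), hc1,
      intervalIntegral.integral_const]
    norm_num
  have hc3 : (∫ s in (2⁻¹:ℝ)..1, (2 - 2 * s)) = 4⁻¹ := by
    rw [intervalIntegral.integral_sub intervalIntegrable_const
      ((by fun_prop : Continuous fun s : ℝ => 2 * s).intervalIntegrable _ _),
      intervalIntegral.integral_const_mul, integral_id, intervalIntegral.integral_const]
    norm_num
  have hc4 : (∫ s in (2⁻¹:ℝ)..1, (1 - (2 - 2 * s))) = 4⁻¹ := by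
    have : (fun s : ℝ => 1 - (2 - 2 * s)) = fun s : ℝ => 2 * s - 1 := by
      funext s; ring
    rw [this, intervalIntegral.integral_sub
      ((by fun_prop : Continuous fun s : ℝ => 2 * s).intervalIntegrable _ _)
      intervalIntegrable_const,
      intervalIntegral.integral_const_mul, integral_id, intervalIntegral.integral_const]
    norm_num
  have hI1 : (∫ t in (0:ℝ)..2⁻¹, g t) ≤ (4⁻¹:ℝ) • fA + (4⁻¹:ℝ) • m := by
    have hint : IntervalIntegrable (fun s : ℝ => (1 - 2 * s) • fA + (2 * s) • m)
        volume 0 2⁻¹ := by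
      apply Continuous.intervalIntegrable
      fun_prop
    have heq : (∫ s in (0:ℝ)..2⁻¹, ((1 - 2 * s) • fA + (2 * s) • m))
        = (4⁻¹:ℝ) • fA + (4⁻¹:ℝ) • m := by
      rw [intervalIntegral.integral_add
        ((by fun_prop : Continuous fun s : ℝ => (1 - 2 * s) • fA).intervalIntegrable _ _)
        ((by fun_prop : Continuous fun s : ℝ => (2 * s) • m).intervalIntegrable _ _),
        intervalIntegral.integral_smul_const, intervalIntegral.integral_smul_const, hc1, hc2]
    rw [← heq]
    exact op_integral_mono 0 2⁻¹ (by norm_num) _ _ hgi1 hint hb2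
  have hI2 : (∫ t in (2⁻¹:ℝ)..1, g t) ≤ (4⁻¹:ℝ) • fB + (4⁻¹:ℝ) • m := by
    have hint : IntervalIntegrable
        (fun s : ℝ => (1 - (2 - 2 * s)) • cfc f (A + N) + (2 - 2 * s) • m)
        volume 2⁻¹ 1 := by
      apply Continuous.intervalIntegrable
      fun_prop
    have heq : (∫ s in (2⁻¹:ℝ)..1, ((1 - (2 - 2 * s)) • cfc f (A + N) + (2 - 2 * s) • m))
        = (4⁻¹:ℝ) • cfc f (A + N) + (4⁻¹:ℝ) • m := by
      rw [intervalIntegral.integral_add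
        ((by fun_prop :
          Continuous fun s : ℝ => (1 - (2 - 2 * s)) • cfc f (A + N)).intervalIntegrable _ _)
        ((by fun_prop : Continuous fun s : ℝ => (2 - 2 * s) • m).intervalIntegrable _ _),
        intervalIntegral.integral_smul_const, intervalIntegral.integral_smul_const, hc3, hc4]
    calc (∫ t in (2⁻¹:ℝ)..1, g t)
        ≤ (4⁻¹:ℝ) • cfc f (A + N) + (4⁻¹:ℝ) • m := by
          rw [← heq]
          exact op_integral_mono 2⁻¹ 1 (by norm_num) _ _ hgi2 hint hb3
      _ ≤ (4⁻¹:ℝ) • fB + (4⁻¹:ℝ) • m := by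
          apply add_le_add_left
          exact op_smul_le_smul _ (by norm_num) hb4
  have hright : (∫ t in (0:ℝ)..1, g t)
      ≤ (4⁻¹:ℝ) • fA + (4⁻¹:ℝ) • fB + (2⁻¹:ℝ) • m := by
    rw [hsplit]
    calc (∫ t in (0:ℝ)..2⁻¹, g t) + ∫ t in (2⁻¹:ℝ)..1, g t
        ≤ ((4⁻¹:ℝ) • fA + (4⁻¹:ℝ) • m) + ((4⁻¹:ℝ) • fB + (4⁻¹:ℝ) • m) :=
          add_le_add hI1 hI2
      _ = (4⁻¹:ℝ) • fA + (4⁻¹:ℝ) • fB + (2⁻¹:ℝ) • m := by module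
  refine ⟨sub_nonneg.mpr hleft, ?_⟩
  rw [sub_le_sub_iff]
  calc (∫ t in (0:ℝ)..1, g t) + (∫ t in (0:ℝ)..1, g t)
      ≤ ((4⁻¹:ℝ) • fA + (4⁻¹:ℝ) • fB + (2⁻¹:ℝ) • m)
        + ((4⁻¹:ℝ) • fA + (4⁻¹:ℝ) • fB + (2⁻¹:ℝ) • m) := add_le_add hright hright
    _ = (2:ℝ)⁻¹ • (fA + fB) + m := by module
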